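/- arXiv:1911.03725 — 3 statements merged into one kernel-verified Lean document; each statement's English description precedes it below -/
import Mathlib

section
/- Let X : ℝ^{n₁×⋯×n_d} → ℝ^m be a linear map, let B ∈ G_{r,s,τ}, η ∈ ℝ^m, and y = X(B) + η. Fix γ ∈ (0,1) and suppose there is δ ∈ (0, γ/(4+γ)) such that (1−δ)·‖Z‖_F² ≤ ‖X(Z)‖₂² ≤ (1+δ)·‖Z‖_F² for every Z ∈ G_{2r,s,2τ} (where 2r = (2r₁,…,2r_d)). Set μ = 1/(1+δ) and b = (1+3δ)/(1−δ). Let (B^k)_{k≥0} be a sequence of tensors with B^0 ∈ G_{r,s,τ} such that for every k ≥ 0 one has B^{k+1} ∈ G_{r,s,τ} and ‖B^{k+1} − W̃^k‖_F ≤ ‖B − W̃^k‖_F, where W̃^k = B^k − μ·X*(X(B^k) − y) and X* denotes the adjoint of X with respect to the Frobenius inner product on ℝ^{n₁×⋯×n_d} and the Euclidean inner product on ℝ^m. Then for every k ≥ 1, ‖B^k − B‖_F² ≤ (2γ^k/(1−δ))·‖y − X(B^0)‖₂² + (2‖η‖₂²/(1−δ))·(1 + b/(1−γ)). -/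
open scoped BigOperators

noncomputable section

/-- Frobenius (ℓ2) norm of a finitely-indexed real array. -/
def frob {ι : Type*} [Fintype ι] (Z : ι → ℝ) : ℝ :=
  Real.sqrt (∑ x, (Z x) ^ 2)

/-- ℓ1 norm of a finitely-indexed real array. -/
def l1 {ι : Type*} [Fintype ι] (Z : ι → ℝ) : ℝ :=
  ∑ x, |Z x|

/-- Tucker product `S ×₁ U₁ ×₂ U₂ ⋯ ×_d U_d`. -/
def tucker {d : ℕ} {n r : Fin d → ℕ} (S : (∀ i, Fin (r i)) → ℝ)
    (U : ∀ i, Fin (n i) → Fin (r i) → ℝ) : (∀ i, Fin (n i)) → ℝ :=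
  fun x => ∑ k : ∀ i, Fin (r i), S k * ∏ i, U i (x i) (k i)

/-- The set `G_{r,s,τ}` of `r`-rank, `s`-sparse tensors whose core has ℓ1 norm at most `τ`
and whose factor-matrix columns have at most `sᵢ` nonzero entries and ℓ2 norm at most 1. -/
def Gset {d : ℕ} (n r s : Fin d → ℕ) (τ : ℝ) : Set ((∀ i, Fin (n i)) → ℝ) :=
  { Z | ∃ (S : (∀ i, Fin (r i)) → ℝ) (U : ∀ i, Fin (n i) → Fin (r i) → ℝ),
      l1 S ≤ τ ∧
      (∀ i j, (Function.support fun a => U i a j).ncard ≤ s i) ∧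
      (∀ i j, Real.sqrt (∑ a, (U i a j) ^ 2) ≤ 1) ∧
      Z = tucker S U }

-- Auxiliary lemmas


lemma frob_nonneg {ι : Type*} [Fintype ι] (f : ι → ℝ) : 0 ≤ frob f :=
  Real.sqrt_nonneg _

lemma frob_sq {ι : Type*} [Fintype ι] (f : ι → ℝ) : frob f ^ 2 = ∑ x, f x ^ 2 :=
  Real.sq_sqrt (Finset.sum_nonneg fun _ _ => sq_nonneg _)

def halfIdx {m : ℕ} (j : Fin (2 * m)) : Fin m :=
  ⟨j.val % m, Nat.mod_lt _ (by have := j.isLt; omega)⟩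

def pib {d : ℕ} {r : Fin d → ℕ} (k : ∀ i, Fin (2 * r i)) : ∀ i, Fin (r i) :=
  fun i => halfIdx (k i)

def coreD {d : ℕ} {r : Fin d → ℕ} (S₁ S₂ : (∀ i, Fin (r i)) → ℝ) :
    (∀ i, Fin (2 * r i)) → ℝ :=
  fun k => (if ∀ i, (k i : ℕ) < r i then S₁ (pib k) else 0) +
           (if ∀ i, r i ≤ (k i : ℕ) then -(S₂ (pib k)) else 0)

def facD {d : ℕ} {n r : Fin d → ℕ} (U₁ U₂ : ∀ i, Fin (n i) → Fin (r i) → ℝ) :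
    ∀ i, Fin (n i) → Fin (2 * r i) → ℝ :=
  fun i a j => if (j : ℕ) < r i then U₁ i a (halfIdx j) else U₂ i a (halfIdx j)

lemma sum_lower_block {d : ℕ} {r : Fin d → ℕ} (g : (∀ i, Fin (r i)) → ℝ) :
    ∑ k : ∀ i, Fin (2 * r i), (if ∀ i, (k i : ℕ) < r i then g (pib k) else 0)
      = ∑ k' : ∀ i, Fin (r i), g k' := by
  classical
  rw [← Finset.sum_filter]
  refine Finset.sum_nbij' (fun k => pib k)
    (fun k' => (fun i => ⟨(k' i : ℕ), by have := (k' i).isLt; omega⟩ : ∀ i, Fin (2 * r i)))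
    ?_ ?_ ?_ ?_ ?_
  · intro a _; exact Finset.mem_univ _
  · intro a _
    simp only [Finset.mem_filter, Finset.mem_univ, true_and]
    intro i; exact (a i).isLt
  · intro a ha
    simp only [Finset.mem_filter, Finset.mem_univ, true_and] at ha
    funext i
    apply Fin.ext
    simp [pib, halfIdx, Nat.mod_eq_of_lt (ha i)]
  · intro a _
    funext i
    apply Fin.ext
    simp [pib, halfIdx, Nat.mod_eq_of_lt (a i).isLt]
  · intro a _; rfl

lemma sum_upper_block {d : ℕ} {r : Fin d → ℕ} (g : (∀ i, Fin (r i)) → ℝ) :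
    ∑ k : ∀ i, Fin (2 * r i), (if ∀ i, r i ≤ (k i : ℕ) then g (pib k) else 0)
      = ∑ k' : ∀ i, Fin (r i), g k' := by
  classical
  rw [← Finset.sum_filter]
  refine Finset.sum_nbij' (fun k => pib k)
    (fun k' => (fun i => ⟨(k' i : ℕ) + r i, by have := (k' i).isLt; omega⟩ : ∀ i, Fin (2 * r i)))
    ?_ ?_ ?_ ?_ ?_
  · intro a _; exact Finset.mem_univ _
  · intro a _
    simp only [Finset.mem_filter, Finset.mem_univ, true_and]
    intro i; exact Nat.le_add_left _ _
  · intro a ha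
    simp only [Finset.mem_filter, Finset.mem_univ, true_and] at ha
    funext i
    apply Fin.ext
    have h1 : ((a i : ℕ)) % r i = (a i : ℕ) - r i := by
      rw [Nat.mod_eq_sub_mod (ha i), Nat.mod_eq_of_lt (by have := (a i).isLt; omega)]
    simp only [pib, halfIdx, h1]
    have h2 := (a i).isLt
    have h3 := ha i
    omega
  · intro a _
    funext i
    apply Fin.ext
    simp [pib, halfIdx, Nat.add_mod_right, Nat.mod_eq_of_lt (a i).isLt]
  · intro a _; rfl

lemma Gset_sub {d : ℕ} {n r s : Fin d → ℕ} {τ : ℝ}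
    {Z₁ Z₂ : (∀ i, Fin (n i)) → ℝ}
    (h₁ : Z₁ ∈ Gset n r s τ) (h₂ : Z₂ ∈ Gset n r s τ) :
    Z₁ - Z₂ ∈ Gset n (fun i => 2 * r i) s (2 * τ) := by
  classical
  obtain ⟨S₁, U₁, hl₁, hs₁, hn₁, hZ₁⟩ := h₁
  obtain ⟨S₂, U₂, hl₂, hs₂, hn₂, hZ₂⟩ := h₂
  refine ⟨coreD S₁ S₂, facD U₁ U₂, ?_, ?_, ?_, ?_⟩
  · -- l1 bound
    have step : l1 (coreD S₁ S₂) ≤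
        (∑ k : ∀ i, Fin (2 * r i), (if ∀ i, (k i : ℕ) < r i then |S₁ (pib k)| else 0)) +
        (∑ k : ∀ i, Fin (2 * r i), (if ∀ i, r i ≤ (k i : ℕ) then |S₂ (pib k)| else 0)) := by
      rw [← Finset.sum_add_distrib]
      refine Finset.sum_le_sum fun k _ => ?_
      refine le_trans (abs_add_le _ _) ?_
      have e1 : |if ∀ i, (k i : ℕ) < r i then S₁ (pib k) else 0|
          = (if ∀ i, (k i : ℕ) < r i then |S₁ (pib k)| else 0) := by
        split_ifs <;> simp
      have e2 : |if ∀ i, r i ≤ (k i : ℕ) then -(S₂ (pib k)) else 0|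
          = (if ∀ i, r i ≤ (k i : ℕ) then |S₂ (pib k)| else 0) := by
        split_ifs <;> simp
      rw [e1, e2]
    rw [sum_lower_block (fun k' => |S₁ k'|), sum_upper_block (fun k' => |S₂ k'|)] at step
    have : (∑ k' : ∀ i, Fin (r i), |S₁ k'|) + (∑ k' : ∀ i, Fin (r i), |S₂ k'|) ≤ 2 * τ := by
      have := hl₁; have := hl₂
      simp only [l1] at *
      linarith
    linarith
  · -- sparsity
    intro i j
    by_cases hj : (j : ℕ) < r i
    · have e : (fun a => facD U₁ U₂ i a j) = fun a => U₁ i a (halfIdx j) := by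
        funext a; simp [facD, hj]
      rw [e]; exact hs₁ i _
    · have e : (fun a => facD U₁ U₂ i a j) = fun a => U₂ i a (halfIdx j) := by
        funext a; simp [facD, hj]
      rw [e]; exact hs₂ i _
  · -- column norms
    intro i j
    by_cases hj : (j : ℕ) < r i
    · have e : ∀ a, facD U₁ U₂ i a j = U₁ i a (halfIdx j) := fun a => by simp [facD, hj]
      simp only [e]; exact hn₁ i _
    · have e : ∀ a, facD U₁ U₂ i a j = U₂ i a (halfIdx j) := fun a => by simp [facD, hj]
      simp only [e]; exact hn₂ i _
  · -- tucker decomposition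
    subst hZ₁ hZ₂
    funext x
    have key : ∀ k : ∀ i, Fin (2 * r i),
        coreD S₁ S₂ k * ∏ i, facD U₁ U₂ i (x i) (k i)
        = (if ∀ i, (k i : ℕ) < r i then S₁ (pib k) * ∏ i, U₁ i (x i) (pib k i) else 0)
          + (if ∀ i, r i ≤ (k i : ℕ) then -(S₂ (pib k) * ∏ i, U₂ i (x i) (pib k i)) else 0) := by
      intro k
      unfold coreD
      rw [add_mul, ite_mul, ite_mul, zero_mul]
      congr 1
      · by_cases h : ∀ i, (k i : ℕ) < r i
        · rw [if_pos h, if_pos h]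
          congr 1
          refine Finset.prod_congr rfl fun i _ => ?_
          simp [facD, h i, pib]
        · rw [if_neg h, if_neg h]
      · by_cases h : ∀ i, r i ≤ (k i : ℕ)
        · rw [if_pos h, if_pos h, neg_mul]
          congr 2
          refine Finset.prod_congr rfl fun i _ => ?_
          have : ¬((k i : ℕ) < r i) := not_lt.mpr (h i)
          simp [facD, this, pib]
        · rw [if_neg h, if_neg h]
    show (tucker S₁ U₁ - tucker S₂ U₂) x = tucker (coreD S₁ S₂) (facD U₁ U₂) x
    have : tucker (coreD S₁ S₂) (facD U₁ U₂) x
        = (∑ k : ∀ i, Fin (2 * r i),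
            (if ∀ i, (k i : ℕ) < r i then S₁ (pib k) * ∏ i, U₁ i (x i) (pib k i) else 0))
          + (∑ k : ∀ i, Fin (2 * r i),
            (if ∀ i, r i ≤ (k i : ℕ) then -(S₂ (pib k) * ∏ i, U₂ i (x i) (pib k i)) else 0)) := by
      rw [← Finset.sum_add_distrib]
      exact Finset.sum_congr rfl fun k _ => key k
    rw [this, sum_lower_block (fun k' => S₁ k' * ∏ i, U₁ i (x i) (k' i)),
      sum_upper_block (fun k' => -(S₂ k' * ∏ i, U₂ i (x i) (k' i)))]
    simp only [Pi.sub_apply, tucker, Finset.sum_neg_distrib]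
    ring

lemma scalar_key (δ γ b μ P Q PQ H E su sw T : ℝ)
    (h1δ : (0:ℝ) < 1 - δ) (h1δ' : (0:ℝ) < 1 + δ) (hδ0 : 0 < δ)
    (hδγ : 4 * δ ≤ γ * (1 - δ)) (hμ1 : (1 + δ) * μ = 1)
    (hb : b = (1 + 3 * δ) / (1 - δ))
    (h2 : su + 2*μ*(PQ - Q) + μ^2*T ≤ sw + 2*μ*(-H - Q) + μ^2*T)
    (hRu : P - 2*PQ + Q ≤ (1 + δ)*su)
    (hRw : (1 - δ)*sw ≤ E + 2*H + Q)
    (e5 : 2*H ≤ E + Q) (e6 : 0 ≤ Q) :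
    P ≤ γ*Q + b*E := by
  have g0 : su + 2*μ*(PQ - Q) ≤ sw + 2*μ*(-H - Q) := by linarith
  have g1 : (1+δ)*su + 2*(PQ - Q) ≤ (1+δ)*sw + 2*(-H - Q) := by
    have h3 := mul_le_mul_of_nonneg_left g0 (le_of_lt h1δ')
    have i1 : (1+δ)*(su + 2*μ*(PQ - Q)) = (1+δ)*su + ((1+δ)*μ)*(2*(PQ - Q)) := by ring
    have i2 : (1+δ)*(sw + 2*μ*(-H - Q)) = (1+δ)*sw + ((1+δ)*μ)*(2*(-H - Q)) := by ring
    rw [i1, i2, hμ1, one_mul, one_mul] at h3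
    exact h3
  have g2 : P ≤ (1+δ)*sw - 2*H - Q := by linarith
  have g3 : (1-δ)*P ≤ (1-δ)*((1+δ)*sw - 2*H - Q) :=
    mul_le_mul_of_nonneg_left g2 (le_of_lt h1δ)
  have g4 : (1+δ)*((1-δ)*sw) ≤ (1+δ)*(E + 2*H + Q) :=
    mul_le_mul_of_nonneg_left hRw (le_of_lt h1δ')
  have g5 : (1-δ)*P ≤ (1+δ)*E + 4*δ*H + 2*δ*Q := by nlinarith [g3, g4]
  have g6 : 2*δ*(2*H) ≤ 2*δ*(E + Q) :=
    mul_le_mul_of_nonneg_left e5 (by linarith : (0:ℝ) ≤ 2*δ)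
  have g7 : (4*δ)*Q ≤ (γ*(1-δ))*Q := mul_le_mul_of_nonneg_right hδγ e6
  have g8 : (1-δ)*P ≤ (1+3*δ)*E + γ*(1-δ)*Q := by nlinarith [g5, g6, g7]
  have hbE : b*(1-δ) = 1+3*δ := by rw [hb]; field_simp
  have goal' : (1-δ)*P ≤ (1-δ)*(γ*Q + b*E) := by
    have i3 : (1-δ)*(γ*Q + b*E) = γ*(1-δ)*Q + (b*(1-δ))*E := by ring
    rw [i3, hbE]
    linarith
  exact le_of_mul_le_mul_left goal' h1δ

set_option maxHeartbeats 1600000 in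
/-- convergence of tensor projected gradient descent (Theorem 3.1). -/
theorem tpgd_convergence
    {d m : ℕ} {n r s : Fin d → ℕ} {τ : ℝ} (hτ : 0 < τ)
    (X : ((∀ i, Fin (n i)) → ℝ) →ₗ[ℝ] (Fin m → ℝ))
    (Xstar : (Fin m → ℝ) →ₗ[ℝ] ((∀ i, Fin (n i)) → ℝ))
    (hadj : ∀ (Z : (∀ i, Fin (n i)) → ℝ) (v : Fin m → ℝ),
      ∑ i, X Z i * v i = ∑ x, Z x * Xstar v x)
    (Btrue : (∀ i, Fin (n i)) → ℝ) (hBtrue : Btrue ∈ Gset n r s τ)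
    (η y : Fin m → ℝ) (hy : y = X Btrue + η)
    (γ δ : ℝ) (hγ : γ ∈ Set.Ioo (0 : ℝ) 1) (hδ0 : 0 < δ) (hδ : δ < γ / (4 + γ))
    (hRIP : ∀ Z ∈ Gset n (fun i => 2 * r i) s (2 * τ),
      (1 - δ) * frob Z ^ 2 ≤ ∑ i, (X Z i) ^ 2 ∧
      ∑ i, (X Z i) ^ 2 ≤ (1 + δ) * frob Z ^ 2)
    (μ b : ℝ) (hμ : μ = 1 / (1 + δ)) (hb : b = (1 + 3 * δ) / (1 - δ))
    (B : ℕ → ((∀ i, Fin (n i)) → ℝ)) (hB0 : B 0 ∈ Gset n r s τ)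
    (hstep : ∀ k : ℕ, B (k + 1) ∈ Gset n r s τ ∧
      frob (B (k + 1) - (B k - μ • Xstar (X (B k) - y))) ≤
        frob (Btrue - (B k - μ • Xstar (X (B k) - y)))) :
    ∀ k : ℕ, 1 ≤ k →
      frob (B k - Btrue) ^ 2 ≤
        2 * γ ^ k / (1 - δ) * (∑ i, (y i - X (B 0) i) ^ 2) +
        2 * (∑ i, (η i) ^ 2) / (1 - δ) * (1 + b / (1 - γ)) := by
  classical
  obtain ⟨hγ0, hγ1⟩ := hγ
  have hδ1 : δ < 1 := by
    have h4γ : (0:ℝ) < 4 + γ := by linarith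
    have : γ / (4 + γ) < 1 := by rw [div_lt_one h4γ]; linarith
    linarith
  have h1δ : (0:ℝ) < 1 - δ := by linarith
  have h1δ' : (0:ℝ) < 1 + δ := by linarith
  have h1γ : (0:ℝ) < 1 - γ := by linarith
  have hδγ : 4 * δ ≤ γ * (1 - δ) := by
    have h4γ : (0:ℝ) < 4 + γ := by linarith
    rw [lt_div_iff₀ h4γ] at hδ
    nlinarith
  have hμ1 : (1 + δ) * μ = 1 := by
    rw [hμ]; field_simp
  have hE : (0:ℝ) ≤ ∑ i, (η i)^2 := Finset.sum_nonneg fun _ _ => sq_nonneg _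
  have hb0 : (0:ℝ) ≤ b := by
    rw [hb]; exact div_nonneg (by linarith) (by linarith)
  have hBmem : ∀ k, B k ∈ Gset n r s τ := by
    intro k
    cases k with
    | zero => exact hB0
    | succ k => exact (hstep k).1
  have hXB : ∀ i, X Btrue i = y i - η i := by
    intro i; rw [hy]; simp [Pi.add_apply]
  -- one-step contraction for the residual
  have hstep2 : ∀ k : ℕ,
      (∑ i, (X (B (k+1)) i - y i)^2)
        ≤ γ * (∑ i, (X (B k) i - y i)^2) + b * ∑ i, (η i)^2 := by
    intro k
    have hu := Gset_sub (hBmem (k+1)) (hBmem k)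
    have hw := Gset_sub hBtrue (hBmem k)
    have hRu := (hRIP _ hu).2
    have hRw := (hRIP _ hw).1
    rw [frob_sq] at hRu hRw
    have h := (hstep k).2
    have h2 : ∑ x, ((B (k+1) - (B k - μ • Xstar (X (B k) - y))) x)^2
            ≤ ∑ x, ((Btrue - (B k - μ • Xstar (X (B k) - y))) x)^2 := by
      have h' := pow_le_pow_left₀ (frob_nonneg _) h 2
      rwa [frob_sq, frob_sq] at h'
    have expand : ∀ A : (∀ i, Fin (n i)) → ℝ,
        ∑ x, ((A - (B k - μ • Xstar (X (B k) - y))) x)^2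
        = (∑ x, ((A - B k) x)^2)
          + 2*μ*(∑ x, (A - B k) x * Xstar (X (B k) - y) x)
          + μ^2 * (∑ x, (Xstar (X (B k) - y) x)^2) := by
      intro A
      rw [Finset.mul_sum, Finset.mul_sum, ← Finset.sum_add_distrib, ← Finset.sum_add_distrib]
      refine Finset.sum_congr rfl fun x _ => ?_
      simp only [Pi.sub_apply, Pi.smul_apply, smul_eq_mul]
      ring
    rw [expand (B (k+1)), expand Btrue] at h2
    have hadj_u : (∑ x, (B (k+1) - B k) x * Xstar (X (B k) - y) x)
        = ∑ i, (X (B (k+1)) i - y i - (X (B k) i - y i)) * (X (B k) i - y i) := by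
      rw [← hadj]
      refine Finset.sum_congr rfl fun i _ => ?_
      rw [map_sub]
      simp only [Pi.sub_apply]
      ring
    have hadj_w : (∑ x, (Btrue - B k) x * Xstar (X (B k) - y) x)
        = ∑ i, (-(η i) - (X (B k) i - y i)) * (X (B k) i - y i) := by
      rw [← hadj]
      refine Finset.sum_congr rfl fun i _ => ?_
      rw [map_sub]
      simp only [Pi.sub_apply]
      rw [hXB i]
      ring
    rw [hadj_u, hadj_w] at h2
    have hRu' : ∑ i, (X (B (k+1)) i - y i - (X (B k) i - y i))^2
        ≤ (1 + δ) * ∑ x, ((B (k+1) - B k) x)^2 := by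
      refine le_trans (le_of_eq ?_) hRu
      refine Finset.sum_congr rfl fun i _ => ?_
      rw [map_sub]
      simp only [Pi.sub_apply]
      ring
    have hRw' : (1 - δ) * (∑ x, ((Btrue - B k) x)^2)
        ≤ ∑ i, (-(η i) - (X (B k) i - y i))^2 := by
      refine le_trans hRw (le_of_eq ?_)
      refine Finset.sum_congr rfl fun i _ => ?_
      rw [map_sub]
      simp only [Pi.sub_apply]
      rw [hXB i]
      ring
    have e1 : ∑ i, (X (B (k+1)) i - y i - (X (B k) i - y i))^2
        = (∑ i, (X (B (k+1)) i - y i)^2)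
          - 2*(∑ i, (X (B (k+1)) i - y i) * (X (B k) i - y i))
          + ∑ i, (X (B k) i - y i)^2 := by
      rw [Finset.mul_sum, ← Finset.sum_sub_distrib, ← Finset.sum_add_distrib]
      exact Finset.sum_congr rfl fun i _ => by ring
    have e2 : ∑ i, (-(η i) - (X (B k) i - y i))^2
        = (∑ i, (η i)^2) + 2*(∑ i, η i * (X (B k) i - y i))
          + ∑ i, (X (B k) i - y i)^2 := by
      rw [Finset.mul_sum, ← Finset.sum_add_distrib, ← Finset.sum_add_distrib]
      exact Finset.sum_congr rfl fun i _ => by ring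
    have e3 : ∑ i, (X (B (k+1)) i - y i - (X (B k) i - y i)) * (X (B k) i - y i)
        = (∑ i, (X (B (k+1)) i - y i) * (X (B k) i - y i))
          - ∑ i, (X (B k) i - y i)^2 := by
      rw [← Finset.sum_sub_distrib]
      exact Finset.sum_congr rfl fun i _ => by ring
    have e4 : ∑ i, (-(η i) - (X (B k) i - y i)) * (X (B k) i - y i)
        = -(∑ i, η i * (X (B k) i - y i)) - ∑ i, (X (B k) i - y i)^2 := by
      rw [← Finset.sum_neg_distrib, ← Finset.sum_sub_distrib]
      exact Finset.sum_congr rfl fun i _ => by ring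
    have e5 : 2*(∑ i, η i * (X (B k) i - y i))
        ≤ (∑ i, (η i)^2) + ∑ i, (X (B k) i - y i)^2 := by
      rw [Finset.mul_sum, ← Finset.sum_add_distrib]
      exact Finset.sum_le_sum fun i _ => by
        nlinarith [sq_nonneg (η i - (X (B k) i - y i))]
    have e6 : (0:ℝ) ≤ ∑ i, (X (B k) i - y i)^2 :=
      Finset.sum_nonneg fun _ _ => sq_nonneg _
    rw [e3, e4] at h2
    rw [e1] at hRu'
    rw [e2] at hRw'
    exact scalar_key δ γ b μ _ _ _ _ _ _ _ _ h1δ h1δ' hδ0 hδγ hμ1 hb h2 hRu' hRw' e5 e6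
  -- iterate
  have hak : ∀ k : ℕ, (∑ i, (X (B k) i - y i)^2)
      ≤ γ^k * (∑ i, (X (B 0) i - y i)^2) + b * (∑ i, (η i)^2) / (1-γ) := by
    intro k
    induction k with
    | zero =>
      have h0 : (0:ℝ) ≤ b * (∑ i, (η i)^2) / (1-γ) :=
        div_nonneg (mul_nonneg hb0 hE) (le_of_lt h1γ)
      simp only [pow_zero, one_mul]
      linarith
    | succ k ih =>
      have h1 := hstep2 k
      have h2 : γ * (∑ i, (X (B k) i - y i)^2)
          ≤ γ * (γ^k * (∑ i, (X (B 0) i - y i)^2) + b * (∑ i, (η i)^2) / (1-γ)) :=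
        mul_le_mul_of_nonneg_left ih (le_of_lt hγ0)
      have h3 : γ * (γ^k * (∑ i, (X (B 0) i - y i)^2) + b * (∑ i, (η i)^2) / (1-γ))
            + b * (∑ i, (η i)^2)
          = γ^(k+1) * (∑ i, (X (B 0) i - y i)^2) + b * (∑ i, (η i)^2) / (1-γ) := by
        field_simp
        ring
      linarith
  -- conclude
  intro k _
  have hz := Gset_sub (hBmem k) hBtrue
  have hR := (hRIP _ hz).1
  have hXz : ∑ i, (X (B k - Btrue) i)^2
      ≤ 2*(∑ i, (X (B k) i - y i)^2) + 2*(∑ i, (η i)^2) := by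
    have e : ∀ i, X (B k - Btrue) i = (X (B k) i - y i) + η i := by
      intro i
      rw [map_sub]
      simp only [Pi.sub_apply]
      rw [hXB i]
      ring
    calc ∑ i, (X (B k - Btrue) i)^2 = ∑ i, ((X (B k) i - y i) + η i)^2 :=
          Finset.sum_congr rfl fun i _ => by rw [e i]
      _ ≤ ∑ i, (2*(X (B k) i - y i)^2 + 2*(η i)^2) :=
          Finset.sum_le_sum fun i _ => by
            nlinarith [sq_nonneg ((X (B k) i - y i) - η i)]
      _ = 2*(∑ i, (X (B k) i - y i)^2) + 2*(∑ i, (η i)^2) := by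
          rw [Finset.sum_add_distrib, ← Finset.mul_sum, ← Finset.mul_sum]
  have hfr : (1-δ) * frob (B k - Btrue) ^ 2
      ≤ 2*(∑ i, (X (B k) i - y i)^2) + 2*(∑ i, (η i)^2) := le_trans hR hXz
  have hky := hak k
  have hA0 : ∑ i, (y i - X (B 0) i)^2 = ∑ i, (X (B 0) i - y i)^2 :=
    Finset.sum_congr rfl fun i _ => by ring
  rw [hA0]
  have final : 2*γ^k/(1-δ)*(∑ i, (X (B 0) i - y i)^2)
        + 2*(∑ i, (η i)^2)/(1-δ)*(1 + b/(1-γ))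
      = (2*(γ^k*(∑ i, (X (B 0) i - y i)^2) + b*(∑ i, (η i)^2)/(1-γ))
          + 2*(∑ i, (η i)^2))/(1-δ) := by
    field_simp
    ring
  rw [final, le_div_iff₀ h1δ]
  nlinarith [hfr, hky]
end
end

section
/- Let X : ℝ^{n₁×⋯×n_d} → ℝ^m be a linear map, let B ∈ G_{r,s,τ}, η ∈ ℝ^m, and y = X(B) + η, and define the loss L(Z) = ‖y − X(Z)‖₂². Fix γ ∈ (0,1) and suppose there is δ ∈ (0, γ/(4+γ)) such that (1−δ)·‖Z‖_F² ≤ ‖X(Z)‖₂² ≤ (1+δ)·‖Z‖_F² for every Z ∈ G_{2r,s,2τ} (where 2r = (2r₁,…,2r_d)). Set μ = 1/(1+δ) and b = (1+3δ)/(1−δ). Suppose B^k, B^{k+1} ∈ G_{r,s,τ} satisfy ‖B^{k+1} − W̃^k‖_F ≤ ‖B − W̃^k‖_F, where W̃^k = B^k − μ·X*(X(B^k) − y) and X* is the adjoint of X with respect to the Frobenius inner product. Then L(B^{k+1}) ≤ γ·L(B^k) + b·‖η‖₂². -/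
open scoped BigOperators

noncomputable section

private lemma sum_emb {α β : Type*} [Fintype α] [Fintype β] [DecidableEq β]
    (e : α ↪ β) (g : β → ℝ) (h : ∀ b, (¬ ∃ a, e a = b) → g b = 0) :
    ∑ b, g b = ∑ a, g (e a) := by
  rw [← Finset.sum_map Finset.univ e g]
  refine (Finset.sum_subset (Finset.subset_univ _) fun b _ hb => h b ?_).symm
  simpa using hb

private lemma sub_mem_G2 {d : ℕ} {n r s : Fin d → ℕ} {τ : ℝ}
    {Z Z' : (∀ i, Fin (n i)) → ℝ} (hZ : Z ∈ Gset n r s τ) (hZ' : Z' ∈ Gset n r s τ) :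
    Z - Z' ∈ Gset n (fun i => 2 * r i) s (2 * τ) := by
  obtain ⟨S, U, hS, hsupp, hnorm, rfl⟩ := hZ
  obtain ⟨S', U', hS', hsupp', hnorm', rfl⟩ := hZ'
  set U2 : ∀ i, Fin (n i) → Fin (2 * r i) → ℝ :=
    fun i a k => if h : (k : ℕ) < r i then U i a ⟨k, h⟩
      else U' i a ⟨(k : ℕ) - r i, by have := k.isLt; omega⟩ with hU2
  set A : (∀ i, Fin (2 * r i)) → ℝ :=
    fun k => if h : ∀ i, (k i : ℕ) < r i then S (fun i => ⟨k i, h i⟩) else 0 with hA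
  set B : (∀ i, Fin (2 * r i)) → ℝ :=
    fun k => if h : ∀ i, r i ≤ (k i : ℕ) then
      -(S' (fun i => ⟨(k i : ℕ) - r i, by have := (k i).isLt; omega⟩)) else 0 with hB
  have e1inj : Function.Injective
      (fun (j : ∀ i, Fin (r i)) => (fun i => (⟨j i, by have := (j i).isLt; omega⟩ : Fin (2 * r i)))) := by
    intro a b hab
    funext i
    have h := congrFun hab i
    simp only [Fin.mk.injEq] at h
    exact Fin.ext h
  have e2inj : Function.Injective
      (fun (j : ∀ i, Fin (r i)) => (fun i => (⟨r i + j i, by have := (j i).isLt; omega⟩ : Fin (2 * r i)))) := by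
    intro a b hab
    funext i
    have h : r i + (a i : ℕ) = r i + (b i : ℕ) := congrArg Fin.val (congrFun hab i)
    exact Fin.ext (by omega)
  set e1 : (∀ i, Fin (r i)) ↪ (∀ i, Fin (2 * r i)) := ⟨_, e1inj⟩ with he1
  set e2 : (∀ i, Fin (r i)) ↪ (∀ i, Fin (2 * r i)) := ⟨_, e2inj⟩ with he2
  have hA0 : ∀ k, (¬ ∃ j, e1 j = k) → A k = 0 := by
    intro k hk
    have hc : ¬ ∀ i, (k i : ℕ) < r i := by
      intro h
      exact hk ⟨fun i => ⟨k i, h i⟩, funext fun i => Fin.ext rfl⟩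
    simp only [hA, dif_neg hc]
  have hB0 : ∀ k, (¬ ∃ j, e2 j = k) → B k = 0 := by
    intro k hk
    have hc : ¬ ∀ i, r i ≤ (k i : ℕ) := by
      intro h
      refine hk ⟨fun i => ⟨(k i : ℕ) - r i, by have := (k i).isLt; have := h i; omega⟩,
        funext fun i => Fin.ext ?_⟩
      show r i + ((k i : ℕ) - r i) = (k i : ℕ)
      have := h i
      omega
    simp only [hB, dif_neg hc]
  have hAe : ∀ j, A (e1 j) = S j := by
    intro j
    have hc : ∀ i, ((e1 j i : ℕ)) < r i := fun i => (j i).isLt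
    simp only [hA, dif_pos hc]
    congr 1
  have hBe : ∀ j, B (e2 j) = -(S' j) := by
    intro j
    have hc : ∀ i, r i ≤ ((e2 j i : ℕ)) := fun i => Nat.le_add_right _ _
    simp only [hB, dif_pos hc]
    rw [neg_inj]
    congr 1
    funext i
    apply Fin.ext
    show r i + (j i : ℕ) - r i = (j i : ℕ)
    omega
  have hU2e1 : ∀ (i : Fin d) (a : Fin (n i)) (j : ∀ i, Fin (r i)), U2 i a (e1 j i) = U i a (j i) := by
    intro i a j
    have hc : ((e1 j i : ℕ)) < r i := (j i).isLt
    simp only [hU2, dif_pos hc]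
    rfl
  have hU2e2 : ∀ (i : Fin d) (a : Fin (n i)) (j : ∀ i, Fin (r i)), U2 i a (e2 j i) = U' i a (j i) := by
    intro i a j
    have hc : ¬ ((e2 j i : ℕ)) < r i := by
      show ¬ r i + (j i : ℕ) < r i
      omega
    simp only [hU2, dif_neg hc]
    congr 1
    apply Fin.ext
    show r i + (j i : ℕ) - r i = (j i : ℕ)
    omega
  refine ⟨fun k => A k + B k, U2, ?_, ?_, ?_, ?_⟩
  · have h1 : ∑ k, |A k| = ∑ j, |A (e1 j)| :=
      sum_emb e1 (fun k => |A k|) (fun b hb => by show |A b| = 0; rw [hA0 b hb, abs_zero])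
    have h2 : ∑ k, |B k| = ∑ j, |B (e2 j)| :=
      sum_emb e2 (fun k => |B k|) (fun b hb => by show |B b| = 0; rw [hB0 b hb, abs_zero])
    have h1' : ∑ j, |A (e1 j)| = l1 S :=
      Finset.sum_congr rfl fun j _ => by rw [hAe]
    have h2' : ∑ j, |B (e2 j)| = l1 S' :=
      Finset.sum_congr rfl fun j _ => by rw [hBe, abs_neg]
    calc l1 (fun k => A k + B k) ≤ ∑ k, (|A k| + |B k|) :=
          Finset.sum_le_sum fun k _ => abs_add_le _ _
      _ = ∑ k, |A k| + ∑ k, |B k| := Finset.sum_add_distrib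
      _ ≤ τ + τ := by rw [h1, h1', h2, h2']; exact add_le_add hS hS'
      _ = 2 * τ := by ring
  · intro i j
    by_cases h : (j : ℕ) < r i
    · simp only [hU2, dif_pos h]
      exact hsupp i ⟨j, h⟩
    · simp only [hU2, dif_neg h]
      exact hsupp' i _
  · intro i j
    by_cases h : (j : ℕ) < r i
    · simp only [hU2, dif_pos h]
      exact hnorm i ⟨j, h⟩
    · simp only [hU2, dif_neg h]
      exact hnorm' i _
  · funext x
    show (tucker S U - tucker S' U') x = _
    rw [Pi.sub_apply]
    simp only [tucker]
    have hsplit : ∀ k : ∀ i, Fin (2 * r i),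
        (A k + B k) * ∏ i, U2 i (x i) (k i)
          = A k * ∏ i, U2 i (x i) (k i) + B k * ∏ i, U2 i (x i) (k i) :=
      fun k => add_mul _ _ _
    rw [Finset.sum_congr rfl fun k _ => hsplit k, Finset.sum_add_distrib]
    have hsum1 : ∑ k, A k * ∏ i, U2 i (x i) (k i) = ∑ j, S j * ∏ i, U i (x i) (j i) := by
      rw [sum_emb e1 _ (fun b hb => by show A b * _ = 0; rw [hA0 b hb, zero_mul])]
      refine Finset.sum_congr rfl fun j _ => ?_
      rw [hAe]
      exact congrArg _ (Finset.prod_congr rfl fun i _ => hU2e1 i (x i) j)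
    have hsum2 : ∑ k, B k * ∏ i, U2 i (x i) (k i) = -∑ j, S' j * ∏ i, U' i (x i) (j i) := by
      rw [sum_emb e2 _ (fun b hb => by show B b * _ = 0; rw [hB0 b hb, zero_mul])]
      rw [← Finset.sum_neg_distrib]
      refine Finset.sum_congr rfl fun j _ => ?_
      rw [hBe, neg_mul, neg_inj]
      exact congrArg _ (Finset.prod_congr rfl fun i _ => hU2e2 i (x i) j)
    rw [hsum1, hsum2]
    ring

/-- one-step loss contraction for tensor projected gradient descent. -/
theorem tpgd_one_step_loss
    {d m : ℕ} {n r s : Fin d → ℕ} {τ : ℝ} (hτ : 0 < τ)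
    (X : ((∀ i, Fin (n i)) → ℝ) →ₗ[ℝ] (Fin m → ℝ))
    (Xstar : (Fin m → ℝ) →ₗ[ℝ] ((∀ i, Fin (n i)) → ℝ))
    (hadj : ∀ (Z : (∀ i, Fin (n i)) → ℝ) (v : Fin m → ℝ),
      ∑ i, X Z i * v i = ∑ x, Z x * Xstar v x)
    (Btrue : (∀ i, Fin (n i)) → ℝ) (hBtrue : Btrue ∈ Gset n r s τ)
    (η y : Fin m → ℝ) (hy : y = X Btrue + η)
    (L : ((∀ i, Fin (n i)) → ℝ) → ℝ) (hL : ∀ Z, L Z = ∑ i, (y i - X Z i) ^ 2)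
    (γ δ : ℝ) (hγ : γ ∈ Set.Ioo (0 : ℝ) 1) (hδ0 : 0 < δ) (hδ : δ < γ / (4 + γ))
    (hRIP : ∀ Z ∈ Gset n (fun i => 2 * r i) s (2 * τ),
      (1 - δ) * frob Z ^ 2 ≤ ∑ i, (X Z i) ^ 2 ∧
      ∑ i, (X Z i) ^ 2 ≤ (1 + δ) * frob Z ^ 2)
    (μ b : ℝ) (hμ : μ = 1 / (1 + δ)) (hb : b = (1 + 3 * δ) / (1 - δ))
    (Bk Bk1 : (∀ i, Fin (n i)) → ℝ) (hBk : Bk ∈ Gset n r s τ) (hBk1 : Bk1 ∈ Gset n r s τ)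
    (hstep : frob (Bk1 - (Bk - μ • Xstar (X Bk - y))) ≤
      frob (Btrue - (Bk - μ • Xstar (X Bk - y)))) :
    L Bk1 ≤ γ * L Bk + b * ∑ i, (η i) ^ 2 := by
  obtain ⟨hγ0, hγ1⟩ := hγ
  -- basic δ facts
  have h4γ : (0:ℝ) < 4 + γ := by linarith
  have hδ4 : δ * (4 + γ) < γ := by
    have h := mul_lt_mul_of_pos_right hδ h4γ
    have h2 : γ / (4 + γ) * (4 + γ) = γ := by field_simp
    linarith
  have hγδ : 0 ≤ γ * δ := by positivity
  have hδ1 : δ < 1 := by nlinarith [hδ4, hγδ]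
  have h1δ : (0:ℝ) < 1 - δ := by linarith
  have h1δ' : (0:ℝ) < 1 + δ := by linarith
  have hμ1 : μ * (1 + δ) = 1 := by rw [hμ]; field_simp
  have hb1 : b * (1 - δ) = 1 + 3 * δ := by rw [hb]; field_simp
  -- set up u, v, q
  set q : (∀ i, Fin (n i)) → ℝ := Xstar (X Bk - y) with hq
  set u : (∀ i, Fin (n i)) → ℝ := Bk1 - Bk with hu
  set v : (∀ i, Fin (n i)) → ℝ := Btrue - Bk with hv
  have huG : u ∈ Gset n (fun i => 2 * r i) s (2 * τ) := sub_mem_G2 hBk1 hBk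
  have hvG : v ∈ Gset n (fun i => 2 * r i) s (2 * τ) := sub_mem_G2 hBtrue hBk
  obtain ⟨hv1, hv2⟩ := hRIP v hvG
  obtain ⟨hu1, hu2⟩ := hRIP u huG
  have frobsq : ∀ Z : (∀ i, Fin (n i)) → ℝ, frob Z ^ 2 = ∑ x, Z x ^ 2 := fun Z =>
    Real.sq_sqrt (Finset.sum_nonneg fun x _ => sq_nonneg _)
  rw [frobsq] at hu2 hv1
  -- hu2 : ∑ i, (X u i)^2 ≤ (1+δ) * ∑ x, u x^2 ;  hv1 : (1-δ) * ∑ x, v x^2 ≤ ∑ i, (X v i)^2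
  have hXu : ∀ i, X u i = X Bk1 i - X Bk i := by
    intro i; rw [hu, map_sub]; rfl
  have hXv : ∀ i, X v i = X Btrue i - X Bk i := by
    intro i; rw [hv, map_sub]; rfl
  -- the squared step inequality
  have hfrob_nonneg : ∀ Zz : (∀ i, Fin (n i)) → ℝ, 0 ≤ frob Zz := fun Zz => Real.sqrt_nonneg _
  have hstep2 : ∑ x, ((Bk1 - (Bk - μ • q)) x) ^ 2 ≤ ∑ x, ((Btrue - (Bk - μ • q)) x) ^ 2 := by
    have h := pow_le_pow_left₀ (hfrob_nonneg _) hstep 2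
    rwa [frobsq, frobsq] at h
  have hstep3 : ∑ x, (u x + μ * q x) ^ 2 ≤ ∑ x, (v x + μ * q x) ^ 2 := by
    have e1 : ∀ x, (Bk1 - (Bk - μ • q)) x = u x + μ * q x := by
      intro x
      simp only [hu, Pi.sub_apply, Pi.smul_apply, smul_eq_mul]
      ring
    have e2 : ∀ x, (Btrue - (Bk - μ • q)) x = v x + μ * q x := by
      intro x
      simp only [hv, Pi.sub_apply, Pi.smul_apply, smul_eq_mul]
      ring
    calc ∑ x, (u x + μ * q x) ^ 2 = ∑ x, ((Bk1 - (Bk - μ • q)) x) ^ 2 :=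
          Finset.sum_congr rfl fun x _ => by rw [e1]
      _ ≤ ∑ x, ((Btrue - (Bk - μ • q)) x) ^ 2 := hstep2
      _ = ∑ x, (v x + μ * q x) ^ 2 := Finset.sum_congr rfl fun x _ => by rw [e2]
  -- expand squares
  have hexp : ∀ f : (∀ i, Fin (n i)) → ℝ,
      ∑ x, (f x + μ * q x) ^ 2
        = ∑ x, f x ^ 2 + 2 * μ * (∑ x, f x * q x) + μ ^ 2 * ∑ x, q x ^ 2 := by
    intro f
    have hpt : ∀ x, (f x + μ * q x) ^ 2
        = (f x ^ 2 + 2 * μ * (f x * q x)) + μ ^ 2 * q x ^ 2 := fun x => by ring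
    rw [Finset.sum_congr rfl fun x _ => hpt x, Finset.sum_add_distrib,
      Finset.sum_add_distrib, ← Finset.mul_sum, ← Finset.mul_sum]
  rw [hexp u, hexp v] at hstep3
  have hstep_lin : ∑ x, u x ^ 2 + 2 * μ * (∑ x, u x * q x)
      ≤ ∑ x, v x ^ 2 + 2 * μ * (∑ x, v x * q x) := by linarith
  -- adjoint identities
  have hadj' : ∀ Zz : (∀ i, Fin (n i)) → ℝ,
      ∑ x, Zz x * q x = -∑ i, X Zz i * (y i - X Bk i) := by
    intro Zz
    rw [hq, ← hadj Zz (X Bk - y), ← Finset.sum_neg_distrib]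
    refine Finset.sum_congr rfl fun i _ => ?_
    simp only [Pi.sub_apply]
    ring
  have H2 : ∑ x, u x * q x = -∑ i, X u i * (y i - X Bk i) := hadj' u
  have H3 : ∑ x, v x * q x = -∑ i, X v i * (y i - X Bk i) := hadj' v
  -- loss expansion for Bk1
  have H6 : L Bk1 = ∑ i, (y i - X Bk i) ^ 2 - 2 * (∑ i, X u i * (y i - X Bk i))
      + ∑ i, (X u i) ^ 2 := by
    rw [hL]
    have hpt : ∀ i : Fin m, (y i - X Bk1 i) ^ 2
        = ((y i - X Bk i) ^ 2 - 2 * (X u i * (y i - X Bk i))) + (X u i) ^ 2 := by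
      intro i; rw [hXu i]; ring
    rw [Finset.sum_congr rfl fun i _ => hpt i, Finset.sum_add_distrib,
      Finset.sum_sub_distrib, ← Finset.mul_sum]
  have H7 : L Bk = ∑ i, (y i - X Bk i) ^ 2 := hL Bk
  -- residual decomposition
  have hyi : ∀ i, y i = X Btrue i + η i := fun i => by rw [hy]; rfl
  have hwpt : ∀ i : Fin m, y i - X Bk i = X v i + η i := fun i => by
    rw [hXv i, hyi i]; ring
  have H8 : ∑ i, (y i - X Bk i) ^ 2
      = ∑ i, (X v i) ^ 2 + 2 * (∑ i, X v i * η i) + ∑ i, η i ^ 2 := by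
    have hpt : ∀ i : Fin m, (y i - X Bk i) ^ 2
        = ((X v i) ^ 2 + 2 * (X v i * η i)) + η i ^ 2 := fun i => by rw [hwpt i]; ring
    rw [Finset.sum_congr rfl fun i _ => hpt i, Finset.sum_add_distrib,
      Finset.sum_add_distrib, ← Finset.mul_sum]
  have H9 : ∑ i, X v i * (y i - X Bk i) = ∑ i, (X v i) ^ 2 + ∑ i, X v i * η i := by
    have hpt : ∀ i : Fin m, X v i * (y i - X Bk i)
        = (X v i) ^ 2 + X v i * η i := fun i => by rw [hwpt i]; ring
    rw [Finset.sum_congr rfl fun i _ => hpt i, Finset.sum_add_distrib]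
  have H10 : ∑ i, (X v i) ^ 2 ≤ 2 * ∑ i, (y i - X Bk i) ^ 2 + 2 * ∑ i, η i ^ 2 := by
    rw [Finset.mul_sum, Finset.mul_sum, ← Finset.sum_add_distrib]
    refine Finset.sum_le_sum fun i _ => ?_
    rw [hwpt i]
    nlinarith [sq_nonneg (X v i + 2 * η i)]
  have hWn0 : 0 ≤ ∑ i, (y i - X Bk i) ^ 2 := Finset.sum_nonneg fun i _ => sq_nonneg _
  have hEn0 : 0 ≤ ∑ i, (η i : ℝ) ^ 2 := Finset.sum_nonneg fun i _ => sq_nonneg _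
  -- multiply step inequality by (1+δ)
  have hmul := mul_le_mul_of_nonneg_left hstep_lin h1δ'.le
  have eAu : (1 + δ) * (2 * μ * (∑ x, u x * q x))
      = -(2 * ∑ i, X u i * (y i - X Bk i)) := by
    rw [H2]; linear_combination (-(2:ℝ) * ∑ i, X u i * (y i - X Bk i)) * hμ1
  have eAv : (1 + δ) * (2 * μ * (∑ x, v x * q x))
      = -(2 * ∑ i, X v i * (y i - X Bk i)) := by
    rw [H3]; linear_combination (-(2:ℝ) * ∑ i, X v i * (y i - X Bk i)) * hμ1
  have D1 : (1 + δ) * ∑ x, u x ^ 2 - 2 * ∑ i, X u i * (y i - X Bk i)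
      ≤ (1 + δ) * ∑ x, v x ^ 2 - 2 * ∑ i, X v i * (y i - X Bk i) := by
    linarith [hmul, eAu, eAv]
  have D2 : L Bk1 ≤ ∑ i, (y i - X Bk i) ^ 2 - 2 * ∑ i, X v i * (y i - X Bk i)
      + (1 + δ) * ∑ x, v x ^ 2 := by linarith
  have D3 : (1 - δ) * L Bk1 ≤ (1 - δ) * (∑ i, (y i - X Bk i) ^ 2
      - 2 * ∑ i, X v i * (y i - X Bk i)) + (1 + δ) * ∑ i, (X v i) ^ 2 := by
    linarith [mul_le_mul_of_nonneg_left D2 h1δ.le, mul_le_mul_of_nonneg_left hv1 h1δ'.le]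
  have E1 : (1 - δ) * L Bk1 ≤ (1 - δ) * (∑ i, η i ^ 2) + 2 * δ * ∑ i, (X v i) ^ 2 := by
    have H8d : δ * ∑ i, (y i - X Bk i) ^ 2
        = δ * (∑ i, (X v i) ^ 2 + 2 * (∑ i, X v i * η i) + ∑ i, η i ^ 2) := by
      rw [H8]
    have H9d : δ * ∑ i, X v i * (y i - X Bk i)
        = δ * (∑ i, (X v i) ^ 2 + ∑ i, X v i * η i) := by rw [H9]
    linarith [D3, H8, H9, H8d, H9d]
  have key : (1 - δ) * L Bk1 ≤ (1 - δ) * (γ * L Bk + b * ∑ i, η i ^ 2) := by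
    have hPv := mul_le_mul_of_nonneg_left H10 (by positivity : (0:ℝ) ≤ 2 * δ)
    have hcoef : 0 < γ * (1 - δ) - 4 * δ := by linarith
    have hWpos : 0 ≤ (γ * (1 - δ) - 4 * δ) * ∑ i, (y i - X Bk i) ^ 2 :=
      mul_nonneg hcoef.le hWn0
    have hb1En : b * (1 - δ) * (∑ i, η i ^ 2) = (1 + 3 * δ) * (∑ i, η i ^ 2) := by
      linear_combination (∑ i, η i ^ 2) * hb1
    have h7a : γ * L Bk = γ * ∑ i, (y i - X Bk i) ^ 2 := by rw [H7]
    have h7b : γ * δ * L Bk = γ * δ * ∑ i, (y i - X Bk i) ^ 2 := by rw [H7]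
    linarith [E1, hPv, hWpos, h7a, h7b, hb1En, hEn0, hδ0]
  exact (mul_le_mul_iff_right₀ h1δ).mp (by linarith)
end
end

section
/- Fix τ > 0, a rank tuple r = (r₁,…,r_d), and a sparsity tuple s = (s₁,…,s_d). For a = 1, 2, let S⁽ᵃ⁾ ∈ ℝ^{r₁×⋯×r_d} with ‖S⁽ᵃ⁾‖₁ ≤ τ and let U_i⁽ᵃ⁾ ∈ ℝ^{n_i×r_i} (i = 1,…,d) be matrices each of whose columns has at most s_i nonzero entries and ℓ2 norm at most 1. Then ‖S⁽¹⁾ ×₁ U₁⁽¹⁾ ⋯ ×_d U_d⁽¹⁾ − S⁽²⁾ ×₁ U₁⁽²⁾ ⋯ ×_d U_d⁽²⁾‖_F ≤ τ(d+1) · max{ max_{i∈{1,…,d}} max_{j∈{1,…,r_i}} ‖U_i⁽¹⁾(:,j) − U_i⁽²⁾(:,j)‖₂, (1/τ)·‖S⁽¹⁾ − S⁽²⁾‖₁ }; that is, the Tucker-product map Φ(S, U₁,…,U_d) = S ×₁ U₁ ⋯ ×_d U_d is Lipschitz with constant τ(d+1) from the product metric h_P to the Frobenius-norm metric. -/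
open scoped BigOperators

noncomputable section

lemma frob_eq_norm {ι : Type*} [Fintype ι] (Z : ι → ℝ) :
    frob Z = ‖(WithLp.equiv 2 (ι → ℝ)).symm Z‖ := by
  rw [frob, EuclideanSpace.norm_eq]; simp [sq_abs]

lemma frob_finset_sum_le {ι κ : Type*} [Fintype ι] (s : Finset κ) (g : κ → ι → ℝ) :
    frob (fun x => ∑ k ∈ s, g k x) ≤ ∑ k ∈ s, frob (g k) := by
  simp only [frob_eq_norm]
  calc ‖(WithLp.equiv 2 (ι → ℝ)).symm (fun x => ∑ k ∈ s, g k x)‖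
      = ‖∑ k ∈ s, (WithLp.equiv 2 (ι → ℝ)).symm (g k)‖ := by
        congr 1; ext x; rw [WithLp.ofLp_sum, Finset.sum_apply]; rfl
    _ ≤ ∑ k ∈ s, ‖(WithLp.equiv 2 (ι → ℝ)).symm (g k)‖ := norm_sum_le _ _

lemma sqrt_prod' {ι : Type*} (s : Finset ι) (f : ι → ℝ) (hf : ∀ i ∈ s, 0 ≤ f i) :
    Real.sqrt (∏ i ∈ s, f i) = ∏ i ∈ s, Real.sqrt (f i) := by
  have h1 : (∏ i ∈ s, Real.sqrt (f i)) ^ 2 = ∏ i ∈ s, f i := by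
    rw [← Finset.prod_pow]
    exact Finset.prod_congr rfl fun i hi => Real.sq_sqrt (hf i hi)
  rw [← h1, Real.sqrt_sq (Finset.prod_nonneg fun i _ => Real.sqrt_nonneg _)]

lemma frob_rank_one {d : ℕ} {n : Fin d → ℕ} (c : ℝ) (f : ∀ i, Fin (n i) → ℝ) :
    frob (fun x : ∀ i, Fin (n i) => c * ∏ i, f i (x i)) =
      |c| * ∏ i, Real.sqrt (∑ a, f i a ^ 2) := by
  rw [frob]
  have : ∀ x : ∀ i, Fin (n i), (c * ∏ i, f i (x i)) ^ 2 = c ^ 2 * ∏ i, (f i (x i)) ^ 2 := by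
    intro x; rw [mul_pow, Finset.prod_pow]
  simp_rw [this]
  rw [← Finset.mul_sum, Real.sqrt_mul (sq_nonneg c), Real.sqrt_sq_eq_abs]
  congr 1
  rw [← Fintype.prod_sum (fun i a => (f i a) ^ 2),
    sqrt_prod' _ _ (fun i _ => Finset.sum_nonneg fun a _ => sq_nonneg _)]

/-- Frobenius bound for a Tucker product with unit-norm columns. -/
lemma tucker_frob_le {d : ℕ} {n r : Fin d → ℕ} (S : (∀ i, Fin (r i)) → ℝ)
    (V : ∀ i, Fin (n i) → Fin (r i) → ℝ)
    (hV : ∀ i j, Real.sqrt (∑ a, (V i a j) ^ 2) ≤ 1) :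
    frob (tucker S V) ≤ l1 S := by
  have h := frob_finset_sum_le Finset.univ
    (fun (k : ∀ i, Fin (r i)) (x : ∀ i, Fin (n i)) => S k * ∏ i, V i (x i) (k i))
  refine le_trans h ?_
  rw [l1]
  refine Finset.sum_le_sum fun k _ => ?_
  rw [frob_rank_one (S k) (fun i a => V i a (k i))]
  calc |S k| * ∏ i, Real.sqrt (∑ a, (V i a (k i)) ^ 2)
      ≤ |S k| * 1 := by
        refine mul_le_mul_of_nonneg_left ?_ (abs_nonneg _)
        exact Finset.prod_le_one (fun i _ => Real.sqrt_nonneg _) (fun i _ => hV i (k i))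
    _ = |S k| := mul_one _

/-- Key single-mode estimate: if `V` and `W` agree except at mode `m`, frob of the
difference of Tucker products is at most `l1 S * M`. -/
lemma tucker_sub_single {d : ℕ} {n r : Fin d → ℕ} (S : (∀ i, Fin (r i)) → ℝ)
    (V W : ∀ i, Fin (n i) → Fin (r i) → ℝ)
    (hV : ∀ i j, Real.sqrt (∑ a, (V i a j) ^ 2) ≤ 1) (m : Fin d)
    (hVW : ∀ i, i ≠ m → V i = W i) (M : ℝ)
    (hM0 : 0 ≤ M)
    (hM : ∀ j, Real.sqrt (∑ a, (V m a j - W m a j) ^ 2) ≤ M) :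
    frob (tucker S V - tucker S W) ≤ l1 S * M := by
  classical
  set F : (∀ i, Fin (r i)) → ∀ i, Fin (n i) → ℝ := fun k =>
    Function.update (fun i a => V i a (k i)) m (fun a => V m a (k m) - W m a (k m)) with hF
  have key : tucker S V - tucker S W =
      fun x => ∑ k : ∀ i, Fin (r i), S k * ∏ i, F k i (x i) := by
    funext x
    rw [Pi.sub_apply, tucker, tucker, ← Finset.sum_sub_distrib]
    refine Finset.sum_congr rfl fun k _ => ?_
    rw [← mul_sub]
    congr 1
    have e1 : ∀ i ∈ Finset.univ.erase m, V i (x i) (k i) = W i (x i) (k i) := by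
      intro i hi
      rw [hVW i (Finset.ne_of_mem_erase hi)]
    have e2 : ∀ i ∈ Finset.univ.erase m, F k i (x i) = V i (x i) (k i) := by
      intro i hi
      rw [hF]
      simp [Function.update_of_ne (Finset.ne_of_mem_erase hi)]
    rw [← Finset.mul_prod_erase Finset.univ _ (Finset.mem_univ m),
        ← Finset.mul_prod_erase Finset.univ _ (Finset.mem_univ m),
        ← Finset.mul_prod_erase Finset.univ _ (Finset.mem_univ m),
        Finset.prod_congr rfl e1, ← sub_mul]
    have hFm : F k m (x m) = V m (x m) (k m) - W m (x m) (k m) := by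
      rw [hF]; simp [Function.update_self]
    rw [hFm]
    congr 1
    exact ((Finset.prod_congr rfl e2).trans (Finset.prod_congr rfl e1)).symm
  rw [key]
  refine le_trans (frob_finset_sum_le Finset.univ _) ?_
  rw [l1, Finset.sum_mul]
  refine Finset.sum_le_sum fun k _ => ?_
  rw [frob_rank_one (S k) (F k)]
  refine mul_le_mul_of_nonneg_left ?_ (abs_nonneg _)
  rw [← Finset.mul_prod_erase Finset.univ _ (Finset.mem_univ m)]
  have hFm : (fun a => F k m a) = fun a => V m a (k m) - W m a (k m) := by
    rw [hF]; simp [Function.update_self]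
  have h1 : Real.sqrt (∑ a, F k m a ^ 2) ≤ M := by
    calc Real.sqrt (∑ a, F k m a ^ 2)
        = Real.sqrt (∑ a, (V m a (k m) - W m a (k m)) ^ 2) := by
          congr 1; exact Finset.sum_congr rfl fun a _ => by rw [congrFun hFm a]
      _ ≤ M := hM (k m)
  have h2 : ∏ i ∈ Finset.univ.erase m, Real.sqrt (∑ a, F k i a ^ 2) ≤ 1 := by
    refine Finset.prod_le_one (fun i _ => Real.sqrt_nonneg _) fun i hi => ?_
    have : (fun a => F k i a) = fun a => V i a (k i) := by
      rw [hF]; simp [Function.update_of_ne (Finset.ne_of_mem_erase hi)]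
    calc Real.sqrt (∑ a, F k i a ^ 2)
        = Real.sqrt (∑ a, V i a (k i) ^ 2) := by
          congr 1; exact Finset.sum_congr rfl fun a _ => by rw [congrFun this a]
      _ ≤ 1 := hV i (k i)
  calc Real.sqrt (∑ a, F k m a ^ 2) * ∏ i ∈ Finset.univ.erase m, Real.sqrt (∑ a, F k i a ^ 2)
      ≤ M * 1 := mul_le_mul h1 h2
        (Finset.prod_nonneg fun i _ => Real.sqrt_nonneg _) hM0
    _ = M := mul_one M

lemma frob_triangle' {ι : Type*} [Fintype ι] (A B C : ι → ℝ) :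
    frob (A - C) ≤ frob (A - B) + frob (B - C) := by
  simp only [frob_eq_norm]
  have : (WithLp.equiv 2 (ι → ℝ)).symm (A - C) =
      (WithLp.equiv 2 (ι → ℝ)).symm (A - B) + (WithLp.equiv 2 (ι → ℝ)).symm (B - C) := by
    ext x; simp
  rw [this]
  exact norm_add_le _ _

lemma l1_nonneg {ι : Type*} [Fintype ι] (Z : ι → ℝ) : 0 ≤ l1 Z :=
  Finset.sum_nonneg fun x _ => abs_nonneg _

/-- Lemma 5.7: the Tucker-product map is Lipschitz with constant `τ(d+1)`
from the product metric to the Frobenius metric. -/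
theorem tucker_lipschitz
    {d : ℕ} (hd : 0 < d) {n r : Fin d → ℕ} (hr : ∀ i, 0 < r i)
    (s : Fin d → ℕ) {τ : ℝ} (hτ : 0 < τ)
    (S1 S2 : (∀ i, Fin (r i)) → ℝ) (hS1 : l1 S1 ≤ τ) (hS2 : l1 S2 ≤ τ)
    (U1 U2 : ∀ i, Fin (n i) → Fin (r i) → ℝ)
    (hU1 : ∀ i j, (Function.support fun a => U1 i a j).ncard ≤ s i ∧
      Real.sqrt (∑ a, (U1 i a j) ^ 2) ≤ 1)
    (hU2 : ∀ i j, (Function.support fun a => U2 i a j).ncard ≤ s i ∧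
      Real.sqrt (∑ a, (U2 i a j) ^ 2) ≤ 1) :
    frob (tucker S1 U1 - tucker S2 U2) ≤
      τ * (d + 1) *
        max (⨆ i : Fin d, ⨆ j : Fin (r i), Real.sqrt (∑ a, (U1 i a j - U2 i a j) ^ 2))
          ((1 / τ) * l1 (S1 - S2)) := by
  classical
  set M := max (⨆ i : Fin d, ⨆ j : Fin (r i), Real.sqrt (∑ a, (U1 i a j - U2 i a j) ^ 2))
      ((1 / τ) * l1 (S1 - S2)) with hMdef
  have hM0 : 0 ≤ M :=
    le_trans (mul_nonneg (by positivity) (l1_nonneg _)) (le_max_right _ _)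
  have hMcol : ∀ i j, Real.sqrt (∑ a, (U1 i a j - U2 i a j) ^ 2) ≤ M := by
    intro i j
    have h1 : Real.sqrt (∑ a, (U1 i a j - U2 i a j) ^ 2) ≤
        ⨆ j : Fin (r i), Real.sqrt (∑ a, (U1 i a j - U2 i a j) ^ 2) :=
      le_ciSup (f := fun j : Fin (r i) => Real.sqrt (∑ a, (U1 i a j - U2 i a j) ^ 2))
        (Set.Finite.bddAbove (Set.finite_range _)) j
    have h2 : (⨆ j : Fin (r i), Real.sqrt (∑ a, (U1 i a j - U2 i a j) ^ 2)) ≤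
        ⨆ i : Fin d, ⨆ j : Fin (r i), Real.sqrt (∑ a, (U1 i a j - U2 i a j) ^ 2) :=
      le_ciSup (f := fun i : Fin d =>
          ⨆ j : Fin (r i), Real.sqrt (∑ a, (U1 i a j - U2 i a j) ^ 2))
        (Set.Finite.bddAbove (Set.finite_range _)) i
    exact le_trans (le_trans h1 h2) (le_max_left _ _)
  -- hybrid factor matrices
  set V : ℕ → ∀ i, Fin (n i) → Fin (r i) → ℝ :=
    fun m i => if (i : ℕ) < m then U2 i else U1 i with hVdef
  have hV0 : V 0 = U1 := funext fun i => if_neg (Nat.not_lt_zero _)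
  have hVd : V d = U2 := funext fun i => if_pos i.isLt
  have hVcols : ∀ m i j, Real.sqrt (∑ a, (V m i a j) ^ 2) ≤ 1 := by
    intro m i j
    rw [hVdef]
    by_cases h : (i : ℕ) < m
    · simp only [if_pos h]; exact (hU2 i j).2
    · simp only [if_neg h]; exact (hU1 i j).2
  -- first term: change of core
  have hA : frob (tucker S1 U1 - tucker S2 U1) ≤ τ * M := by
    have heq : tucker S1 U1 - tucker S2 U1 = tucker (S1 - S2) U1 := by
      funext x
      rw [Pi.sub_apply, tucker, tucker, tucker, ← Finset.sum_sub_distrib]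
      exact Finset.sum_congr rfl fun k _ => by rw [Pi.sub_apply, sub_mul]
    rw [heq]
    calc frob (tucker (S1 - S2) U1) ≤ l1 (S1 - S2) :=
          tucker_frob_le _ _ (fun i j => (hU1 i j).2)
      _ = τ * ((1 / τ) * l1 (S1 - S2)) := by field_simp
      _ ≤ τ * M := mul_le_mul_of_nonneg_left (le_max_right _ _) hτ.le
  -- telescoping terms
  have hterm : ∀ m ∈ Finset.range d,
      frob (tucker S2 (V m) - tucker S2 (V (m + 1))) ≤ τ * M := by
    intro m hm
    have hmd : m < d := Finset.mem_range.mp hm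
    set mi : Fin d := ⟨m, hmd⟩ with hmi
    have hagree : ∀ i, i ≠ mi → V m i = V (m + 1) i := by
      intro i hi
      simp only [hVdef]
      have : (i : ℕ) ≠ m := fun h => hi (Fin.ext h)
      by_cases h : (i : ℕ) < m
      · rw [if_pos h, if_pos (Nat.lt_succ_of_lt h)]
      · rw [if_neg h, if_neg (by omega)]
    have hcoldiff : ∀ j, Real.sqrt (∑ a, (V m mi a j - V (m + 1) mi a j) ^ 2) ≤ M := by
      intro j
      have h1 : V m mi = U1 mi := by simp only [hVdef]; exact if_neg (by simp [hmi])
      have h2 : V (m + 1) mi = U2 mi := by simp only [hVdef]; exact if_pos (by simp [hmi])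
      rw [h1, h2]
      exact hMcol mi j
    calc frob (tucker S2 (V m) - tucker S2 (V (m + 1)))
        ≤ l1 S2 * M := tucker_sub_single S2 (V m) (V (m + 1)) (hVcols m) mi hagree M hM0 hcoldiff
      _ ≤ τ * M := mul_le_mul_of_nonneg_right hS2 hM0
  -- telescoping sum
  have hB : frob (tucker S2 U1 - tucker S2 U2) ≤ d * (τ * M) := by
    have htel : tucker S2 U1 - tucker S2 U2 =
        fun x => ∑ m ∈ Finset.range d,
          (tucker S2 (V m) - tucker S2 (V (m + 1))) x := by
      funext x
      have := Finset.sum_range_sub' (fun m => tucker S2 (V m) x) d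
      simp only [Pi.sub_apply]
      rw [← hV0, ← hVd, ← this]
    rw [htel]
    calc frob (fun x => ∑ m ∈ Finset.range d,
            (tucker S2 (V m) - tucker S2 (V (m + 1))) x)
        ≤ ∑ m ∈ Finset.range d, frob (tucker S2 (V m) - tucker S2 (V (m + 1))) :=
          frob_finset_sum_le _ _
      _ ≤ ∑ _m ∈ Finset.range d, τ * M := Finset.sum_le_sum hterm
      _ = d * (τ * M) := by rw [Finset.sum_const, Finset.card_range, nsmul_eq_mul]
  calc frob (tucker S1 U1 - tucker S2 U2)
      ≤ frob (tucker S1 U1 - tucker S2 U1) + frob (tucker S2 U1 - tucker S2 U2) :=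
        frob_triangle' _ _ _
    _ ≤ τ * M + d * (τ * M) := add_le_add hA hB
    _ = τ * (d + 1) * M := by ring
end
end
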